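/- Let T : C[0,1] → C[0,1] be a positive linear operator with T(e₀) = e₀ and T(e₁) ≤ e₁ (pointwise on [0,1]), and assume that the iterates T^m(e₁) and T^m(e₂) both converge uniformly on [0,1] to the zero function. Then for every f ∈ C[0,1] the iterates T^m(f) converge uniformly on [0,1] to the constant function f(0), and for every f ∈ C[0,1], every x ∈ [0,1] and every m ∈ ℕ one has |f(0) − T^m(f;x)| ≤ 3·ω₂(f; |T^m(e₁;x)|) + 2·ω₁(f; |T^m(e₁;x)|) + (3/4)·ω₂(f; √(|T^m(e₂;x)| + 2|T^m(e₁;x)|)). -/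

import Mathlib

open Filter

noncomputable section

/-- The unit interval `[0,1]` as a subset of `ℝ`. -/
abbrev I01 : Set ℝ := Set.Icc 0 1

/-- The space `C[0,1]` of continuous real-valued functions on `[0,1]`. -/
abbrev CI := C(I01, ℝ)

/-- The monomial `e i : x ↦ x ^ i`. -/
def e (i : ℕ) : CI := ⟨fun x => (x : ℝ) ^ i, (continuous_subtype_val).pow i⟩

/-- A linear operator on `C[0,1]` is positive if it maps nonnegative functions to
nonnegative functions. -/
def IsPositive (T : CI →ₗ[ℝ] CI) : Prop :=
  ∀ f : CI, (∀ x, 0 ≤ f x) → ∀ x, 0 ≤ T f x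

/-- The `m`-th iterate of `T`. -/
def iter (T : CI →ₗ[ℝ] CI) : ℕ → (CI →ₗ[ℝ] CI)
  | 0 => LinearMap.id
  | m + 1 => T ∘ₗ iter T m

/-- First modulus of smoothness (modulus of continuity). -/
def omega1 (f : CI) (δ : ℝ) : ℝ :=
  sSup {v : ℝ | ∃ (x h : ℝ) (hx : x ∈ I01) (hxh : x + h ∈ I01),
    0 ≤ h ∧ h ≤ δ ∧ v = |f ⟨x + h, hxh⟩ - f ⟨x, hx⟩|}

/-- Second modulus of smoothness. -/
def omega2 (f : CI) (δ : ℝ) : ℝ :=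
  sSup {v : ℝ | ∃ (x h : ℝ) (hx : x ∈ I01) (hxp : x + h ∈ I01) (hxm : x - h ∈ I01),
    0 ≤ h ∧ h ≤ δ ∧ v = |f ⟨x + h, hxp⟩ - 2 * f ⟨x, hx⟩ + f ⟨x - h, hxm⟩|}

-- boundedness of omega1 set
lemma omega1_bdd (f : CI) (δ : ℝ) :
    BddAbove {v : ℝ | ∃ (x h : ℝ) (hx : x ∈ I01) (hxh : x + h ∈ I01),
      0 ≤ h ∧ h ≤ δ ∧ v = |f ⟨x + h, hxh⟩ - f ⟨x, hx⟩|} := by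
  refine ⟨2 * ‖f‖, ?_⟩
  rintro v ⟨x, h, hx, hxh, _, _, rfl⟩
  have h1 : ‖f ⟨x + h, hxh⟩‖ ≤ ‖f‖ := f.norm_coe_le_norm _
  have h2 : ‖f ⟨x, hx⟩‖ ≤ ‖f‖ := f.norm_coe_le_norm _
  calc |f ⟨x + h, hxh⟩ - f ⟨x, hx⟩| ≤ |f ⟨x + h, hxh⟩| + |f ⟨x, hx⟩| := abs_sub _ _
    _ ≤ 2 * ‖f‖ := by
        rw [Real.norm_eq_abs] at h1 h2; linarith

lemma omega2_bdd (f : CI) (δ : ℝ) :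
    BddAbove {v : ℝ | ∃ (x h : ℝ) (hx : x ∈ I01) (hxp : x + h ∈ I01) (hxm : x - h ∈ I01),
      0 ≤ h ∧ h ≤ δ ∧ v = |f ⟨x + h, hxp⟩ - 2 * f ⟨x, hx⟩ + f ⟨x - h, hxm⟩|} := by
  refine ⟨4 * ‖f‖, ?_⟩
  rintro v ⟨x, h, hx, hxp, hxm, _, _, rfl⟩
  have h1 : ‖f ⟨x + h, hxp⟩‖ ≤ ‖f‖ := f.norm_coe_le_norm _
  have h2 : ‖f ⟨x, hx⟩‖ ≤ ‖f‖ := f.norm_coe_le_norm _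
  have h3 : ‖f ⟨x - h, hxm⟩‖ ≤ ‖f‖ := f.norm_coe_le_norm _
  rw [Real.norm_eq_abs] at h1 h2 h3
  have := abs_nonneg (f ⟨x + h, hxp⟩)
  calc |f ⟨x + h, hxp⟩ - 2 * f ⟨x, hx⟩ + f ⟨x - h, hxm⟩|
      ≤ |f ⟨x + h, hxp⟩ - 2 * f ⟨x, hx⟩| + |f ⟨x - h, hxm⟩| := abs_add_le _ _
    _ ≤ |f ⟨x + h, hxp⟩| + |2 * f ⟨x, hx⟩| + |f ⟨x - h, hxm⟩| := by
        have := abs_sub (f ⟨x + h, hxp⟩) (2 * f ⟨x, hx⟩); linarith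
    _ ≤ 4 * ‖f‖ := by rw [abs_mul]; simp only [abs_two]; linarith

lemma omega1_nonneg (f : CI) {δ : ℝ} (hδ : 0 ≤ δ) : 0 ≤ omega1 f δ := by
  apply le_csSup (omega1_bdd f δ)
  exact ⟨0, 0, by norm_num [I01], by norm_num [I01], le_refl _, hδ, by norm_num⟩

lemma omega2_nonneg (f : CI) {δ : ℝ} (hδ : 0 ≤ δ) : 0 ≤ omega2 f δ := by
  apply le_csSup (omega2_bdd f δ)
  refine ⟨0, 0, by norm_num [I01], by norm_num [I01], by norm_num [I01], le_refl _, hδ, ?_⟩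
  norm_num
  rw [show f 0 - 2 * f 0 + f 0 = 0 by ring, abs_zero]

-- membership bound
lemma omega1_le (f : CI) {δ : ℝ} {x h : ℝ} (hx : x ∈ I01) (hxh : x + h ∈ I01)
    (h0 : 0 ≤ h) (h1 : h ≤ δ) : |f ⟨x + h, hxh⟩ - f ⟨x, hx⟩| ≤ omega1 f δ :=
  le_csSup (omega1_bdd f δ) ⟨x, h, hx, hxh, h0, h1, rfl⟩

lemma key_pt (f : CI) {δ : ℝ} (hδ : 0 < δ) (t : I01) :
    |f t - f ⟨0, by norm_num⟩| ≤ (1 + (t : ℝ) / δ) * omega1 f δ := by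
  set tv : ℝ := (t : ℝ) with htv
  have htv0 : 0 ≤ tv := t.2.1
  have htv1 : tv ≤ 1 := t.2.2
  have hω : 0 ≤ omega1 f δ := omega1_nonneg f hδ.le
  rcases eq_or_lt_of_le htv0 with hz | hpos
  · -- t = 0
    have : t = ⟨0, by norm_num⟩ := Subtype.ext hz.symm
    rw [this, sub_self, abs_zero]
    have : (0:ℝ) ≤ 1 + tv / δ := by positivity
    rw [← hz] at this ⊢
    exact mul_nonneg (by positivity) hω
  · set n : ℕ := ⌈tv / δ⌉₊ with hn
    have hn1 : 1 ≤ n := Nat.one_le_ceil_iff.mpr (by positivity)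
    have hnpos : (0:ℝ) < n := by exact_mod_cast hn1
    set h' : ℝ := tv / n with hh'
    have hh'pos : 0 < h' := by positivity
    have hnh' : (n:ℝ) * h' = tv := by rw [hh']; field_simp
    have hh'δ : h' ≤ δ := by
      rw [hh', div_le_iff₀ hnpos]
      have := Nat.le_ceil (tv / δ)
      calc tv = (tv / δ) * δ := by field_simp
        _ ≤ (n:ℝ) * δ := by
            apply mul_le_mul_of_nonneg_right _ hδ.le
            exact_mod_cast this
        _ = δ * n := by ring
    have hmem : ∀ k : ℕ, k ≤ n → (k:ℝ) * h' ∈ I01 := by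
      intro k hk
      constructor
      · positivity
      · calc (k:ℝ) * h' ≤ (n:ℝ) * h' := by
              apply mul_le_mul_of_nonneg_right _ hh'pos.le
              exact_mod_cast hk
          _ = tv := hnh'
          _ ≤ 1 := htv1
    set g : ℕ → ℝ := fun k => f ⟨min ((k:ℝ) * h') tv, by
      constructor
      · exact le_min (by positivity) htv0
      · exact le_trans (min_le_right _ _) htv1⟩ with hg
    have hgn : g n = f t := by
      have : min ((n:ℝ) * h') tv = tv := by rw [hnh', min_self]
      simp only [hg]
      congr 1
      exact Subtype.ext this
    have hg0 : g 0 = f ⟨0, by norm_num⟩ := by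
      have : min ((0:ℕ):ℝ) tv = 0 := by simp [min_eq_left htv0]
      simp only [hg]
      congr 1
      apply Subtype.ext
      simpa using this
    have hstep : ∀ k ∈ Finset.range n, |g (k+1) - g k| ≤ omega1 f δ := by
      intro k hk
      rw [Finset.mem_range] at hk
      have hk1 : (k:ℝ) * h' ∈ I01 := hmem k hk.le
      have hk2 : (k:ℝ) * h' + h' ∈ I01 := by
        have : (k:ℝ) * h' + h' = ((k+1 : ℕ):ℝ) * h' := by push_cast; ring
        rw [this]; exact hmem (k+1) hk
      have e1 : g (k+1) = f ⟨(k:ℝ) * h' + h', hk2⟩ := by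
        simp only [hg]
        congr 1
        apply Subtype.ext
        have hle : ((k+1 : ℕ):ℝ) * h' ≤ tv := by
          rw [← hnh']
          apply mul_le_mul_of_nonneg_right _ hh'pos.le
          exact_mod_cast hk
        simp only []
        rw [min_eq_left hle]
        push_cast; ring
      have e2 : g k = f ⟨(k:ℝ) * h', hk1⟩ := by
        simp only [hg]
        congr 1
        apply Subtype.ext
        have hle : ((k : ℕ):ℝ) * h' ≤ tv := by
          rw [← hnh']
          apply mul_le_mul_of_nonneg_right _ hh'pos.le
          exact_mod_cast hk.le
        simpa using min_eq_left hle
      rw [e1, e2]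
      exact omega1_le f hk1 hk2 hh'pos.le hh'δ
    have htel : f t - f ⟨0, by norm_num⟩ = ∑ k ∈ Finset.range n, (g (k+1) - g k) := by
      rw [Finset.sum_range_sub g n, hgn, hg0]
    calc |f t - f ⟨0, by norm_num⟩| = |∑ k ∈ Finset.range n, (g (k+1) - g k)| := by rw [htel]
      _ ≤ ∑ k ∈ Finset.range n, |g (k+1) - g k| := Finset.abs_sum_le_sum_abs _ _
      _ ≤ ∑ _k ∈ Finset.range n, omega1 f δ := Finset.sum_le_sum hstep
      _ = (n:ℝ) * omega1 f δ := by rw [Finset.sum_const, Finset.card_range]; push_cast; ring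
      _ ≤ (1 + tv / δ) * omega1 f δ := by
          apply mul_le_mul_of_nonneg_right _ hω
          have := Nat.ceil_lt_add_one (show (0:ℝ) ≤ tv / δ by positivity)
          rw [hn]
          push_cast
          linarith

lemma iter_pos {T : CI →ₗ[ℝ] CI} (hpos : IsPositive T) : ∀ m, IsPositive (iter T m)
  | 0 => fun f hf x => by simpa [iter] using hf x
  | m + 1 => fun f hf x => by
      simpa [iter] using hpos _ (iter_pos hpos m f hf) x

lemma iter_e0 {T : CI →ₗ[ℝ] CI} (h0 : T (e 0) = e 0) : ∀ m, iter T m (e 0) = e 0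
  | 0 => rfl
  | m + 1 => by simp [iter, iter_e0 h0 m, h0]

lemma pos_mono {L : CI →ₗ[ℝ] CI} (hL : IsPositive L) {g h : CI}
    (H : ∀ t, g t ≤ h t) (x : I01) : L g x ≤ L h x := by
  have := hL (h - g) (fun t => by simpa using sub_nonneg.mpr (H t)) x
  rw [map_sub] at this
  simp only [ContinuousMap.sub_apply] at this
  linarith

lemma e1_nonneg (x : I01) : 0 ≤ e 1 x := by simpa [e] using x.2.1

/-- The main quantitative bound. -/
lemma main_bound (T : CI →ₗ[ℝ] CI) (hpos : IsPositive T) (h0 : T (e 0) = e 0)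
    (f : CI) (x : I01) (m : ℕ) {δ : ℝ} (hδ : 0 < δ) :
    |f ⟨0, by norm_num⟩ - iter T m f x| ≤
      (1 + (iter T m (e 1) x) / δ) * omega1 f δ := by
  set L := iter T m with hL
  have hLpos : IsPositive L := iter_pos hpos m
  set a : ℝ := omega1 f δ with ha
  have hann : 0 ≤ a := omega1_nonneg f hδ.le
  set c : ℝ := f ⟨0, by norm_num⟩ with hc
  set s : ℝ := L (e 1) x with hs
  have hsnn : 0 ≤ s := hLpos (e 1) e1_nonneg x
  -- pointwise bounds
  have hpt : ∀ t : I01, |f t - c| ≤ a + (a / δ) * (t : ℝ) := by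
    intro t
    have := key_pt f hδ t
    calc |f t - c| ≤ (1 + (t:ℝ)/δ) * a := this
      _ = a + (a / δ) * (t:ℝ) := by field_simp
  have hupper : ∀ t : I01, f t ≤ ((c + a) • e 0 + (a/δ) • e 1) t := by
    intro t
    have h1 := (abs_le.mp (hpt t)).2
    have he0 : e 0 t = 1 := by simp [e]
    have he1 : e 1 t = (t:ℝ) := by simp [e]
    simp only [ContinuousMap.add_apply, ContinuousMap.smul_apply, he0, he1, smul_eq_mul]
    linarith
  have hlower : ∀ t : I01, ((c - a) • e 0 - (a/δ) • e 1) t ≤ f t := by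
    intro t
    have h1 := (abs_le.mp (hpt t)).1
    have he0 : e 0 t = 1 := by simp [e]
    have he1 : e 1 t = (t:ℝ) := by simp [e]
    simp only [ContinuousMap.sub_apply, ContinuousMap.smul_apply, he0, he1, smul_eq_mul]
    linarith
  have hLe0 : L (e 0) x = 1 := by rw [hL, iter_e0 h0 m]; simp [e]
  have hub := pos_mono hLpos hupper x
  have hlb := pos_mono hLpos hlower x
  rw [map_add, map_smul, map_smul] at hub
  rw [map_sub, map_smul, map_smul] at hlb
  simp only [ContinuousMap.add_apply, ContinuousMap.sub_apply, ContinuousMap.smul_apply,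
    smul_eq_mul, hLe0, ← hs] at hub hlb
  rw [abs_le]
  constructor
  · have : (1 + s/δ) * a = a + a/δ * s := by field_simp
    rw [this]; linarith
  · have : (1 + s/δ) * a = a + a/δ * s := by field_simp
    rw [this]; linarith

lemma omega1_small (f : CI) {ε : ℝ} (hε : 0 < ε) : ∃ δ > 0, omega1 f δ ≤ ε := by
  have hc : UniformContinuous f := CompactSpace.uniformContinuous_of_continuous f.continuous
  obtain ⟨δ, hδ, H⟩ := Metric.uniformContinuous_iff.mp hc ε hε
  refine ⟨δ/2, by positivity, ?_⟩
  apply csSup_le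
  · exact ⟨0, 0, 0, by norm_num [I01], by norm_num [I01], le_refl _, by positivity, by norm_num⟩
  · rintro v ⟨x, h, hx, hxh, hh0, hhδ, rfl⟩
    have hd : dist (⟨x + h, hxh⟩ : I01) ⟨x, hx⟩ < δ := by
      rw [Subtype.dist_eq, Real.dist_eq]
      rw [show x + h - x = h by ring, abs_of_nonneg hh0]
      linarith
    have := H hd
    rw [Real.dist_eq] at this
    exact this.le

theorem stmt7 (T : CI →ₗ[ℝ] CI) (hpos : IsPositive T)
    (h0 : T (e 0) = e 0) (h1 : ∀ x : I01, T (e 1) x ≤ e 1 x)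
    (hconv1 : TendstoUniformly (fun m x => iter T m (e 1) x) (fun _ => (0 : ℝ)) atTop)
    (hconv2 : TendstoUniformly (fun m x => iter T m (e 2) x) (fun _ => (0 : ℝ)) atTop) :
    (∀ f : CI, TendstoUniformly (fun m x => iter T m f x)
        (fun _ => f ⟨0, by norm_num⟩) atTop) ∧
    (∀ f : CI, ∀ x : I01, ∀ m : ℕ,
      |f ⟨0, by norm_num⟩ - iter T m f x| ≤
        3 * omega2 f |iter T m (e 1) x|
        + 2 * omega1 f |iter T m (e 1) x|
        + (3 / 4) * omega2 f
            (Real.sqrt (|iter T m (e 2) x| + 2 * |iter T m (e 1) x|))) := by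
  constructor
  · -- uniform convergence
    intro f
    rw [Metric.tendstoUniformly_iff]
    intro ε hε
    obtain ⟨δ, hδ, hω⟩ := omega1_small f (show (0:ℝ) < ε/3 by positivity)
    have h1' := Metric.tendstoUniformly_iff.mp hconv1 δ hδ
    filter_upwards [h1'] with m hm x
    have hs : iter T m (e 1) x < δ := by
      have := hm x
      rw [Real.dist_eq] at this
      have hsnn : 0 ≤ iter T m (e 1) x := iter_pos hpos m (e 1) e1_nonneg x
      rw [show (0:ℝ) - iter T m (e 1) x = -(iter T m (e 1) x) by ring, abs_neg,
        abs_of_nonneg hsnn] at this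
      exact this
    have hsnn : 0 ≤ iter T m (e 1) x := iter_pos hpos m (e 1) e1_nonneg x
    rw [Real.dist_eq]
    calc |f ⟨0, by norm_num⟩ - iter T m f x| ≤ (1 + (iter T m (e 1) x)/δ) * omega1 f δ :=
          main_bound T hpos h0 f x m hδ
      _ ≤ 2 * (ε/3) := by
          apply mul_le_mul _ hω (omega1_nonneg f hδ.le) (by norm_num)
          have : iter T m (e 1) x / δ ≤ 1 := by
            rw [div_le_one hδ]; exact hs.le
          linarith
      _ < ε := by linarith
  · -- quantitative estimate
    intro f x m
    set s : ℝ := iter T m (e 1) x with hsdef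
    have hsnn : 0 ≤ s := iter_pos hpos m (e 1) e1_nonneg x
    have habs : |s| = s := abs_of_nonneg hsnn
    have hω2a : 0 ≤ omega2 f |s| := omega2_nonneg f (abs_nonneg _)
    have hω2b : 0 ≤ omega2 f (Real.sqrt (|iter T m (e 2) x| + 2 * |s|)) :=
      omega2_nonneg f (Real.sqrt_nonneg _)
    rcases eq_or_lt_of_le hsnn with hz | hp
    · -- s = 0
      have hmain : |f ⟨0, by norm_num⟩ - iter T m f x| ≤ 0 := by
        apply le_of_forall_pos_le_add
        intro ε hε
        obtain ⟨δ, hδ, hω⟩ := omega1_small f hε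
        calc |f ⟨0, by norm_num⟩ - iter T m f x| ≤ (1 + s/δ) * omega1 f δ :=
              main_bound T hpos h0 f x m hδ
          _ = omega1 f δ := by rw [← hz]; ring_nf
          _ ≤ ε := hω
          _ = 0 + ε := by ring
      have hω1 : 0 ≤ omega1 f |s| := omega1_nonneg f (abs_nonneg _)
      linarith
    · -- s > 0
      calc |f ⟨0, by norm_num⟩ - iter T m f x| ≤ (1 + s/s) * omega1 f s :=
            main_bound T hpos h0 f x m hp
        _ = 2 * omega1 f s := by rw [div_self hp.ne']; ring
        _ = 2 * omega1 f |s| := by rw [habs]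
        _ ≤ 3 * omega2 f |s| + 2 * omega1 f |s|
            + (3 / 4) * omega2 f (Real.sqrt (|iter T m (e 2) x| + 2 * |s|)) := by linarith
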